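/- The k-subalgebra B₀ of A generated by x⁻¹ and y·x^{−(g+1)} is equal, as a k-subspace of A, to the k-linear span of the set {x^{−n} : n ≥ 0} ∪ {y·x^{−m} : m ≥ g+1}. -/

import Mathlib

open Polynomial

/-- The defining polynomial `Y² − h(X)·Y − f(X)` of a hyperelliptic curve, as a polynomial
in `Y` over `k[X]`. -/
noncomputable def hypPoly {k : Type} [Field k] (h f : k[X]) : Polynomial (Polynomial k) :=
  X ^ 2 - C h * X - C f

/-- The affine coordinate ring `R = k[X][Y]/(Y² − h·Y − f)` of the curve over `U_∞`. -/
abbrev HypRing {k : Type} [Field k] (h f : k[X]) : Type :=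
  AdjoinRoot (hypPoly h f)

/-- The image `x` of `X` in `R`. -/
noncomputable def hypX {k : Type} [Field k] (h f : k[X]) : HypRing h f :=
  AdjoinRoot.of (hypPoly h f) X

/-- The image `y` of `Y` in `R`. -/
noncomputable def hypY {k : Type} [Field k] (h f : k[X]) : HypRing h f :=
  AdjoinRoot.root (hypPoly h f)

/-- `A = R[1/x] = O_X(U₀ ∩ U_∞)`. -/
abbrev HypA {k : Type} [Field k] (h f : k[X]) : Type :=
  Localization.Away (hypX h f)

/-- `x` as a unit of `A`. -/
noncomputable def hypXUnit {k : Type} [Field k] (h f : k[X]) : (HypA h f)ˣ :=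
  (IsLocalization.Away.algebraMap_isUnit (S := HypA h f) (hypX h f)).unit

/-- The image of `y` in `A`. -/
noncomputable def hypYA {k : Type} [Field k] (h f : k[X]) : HypA h f :=
  algebraMap (HypRing h f) (HypA h f) (hypY h f)

variable {k : Type} [Field k] (h f : k[X])

lemma hypU_val : ((hypXUnit h f : (HypA h f)ˣ) : HypA h f)
    = algebraMap (HypRing h f) (HypA h f) (hypX h f) :=
  IsUnit.unit_spec _

lemma hypY_sq : hypYA h f ^ 2 =
    algebraMap (HypRing h f) (HypA h f) (AdjoinRoot.of (hypPoly h f) h) * hypYA h f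
      + algebraMap (HypRing h f) (HypA h f) (AdjoinRoot.of (hypPoly h f) f) := by
  have h0 : hypY h f ^ 2 = AdjoinRoot.of (hypPoly h f) h * hypY h f
      + AdjoinRoot.of (hypPoly h f) f := by
    have h1 := AdjoinRoot.eval₂_root (hypPoly h f)
    rw [hypPoly] at h1
    rw [eval₂_sub, eval₂_sub, eval₂_mul, eval₂_pow, eval₂_X, eval₂_C, eval₂_C] at h1
    unfold hypY hypPoly
    rw [sub_eq_zero] at h1
    rw [add_comm]
    exact eq_add_of_sub_eq h1
  have h2 := congrArg (algebraMap (HypRing h f) (HypA h f)) h0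
  simpa [hypYA, map_pow] using h2

def hypGens (g : ℕ) : Set (HypA h f) :=
  { a : HypA h f | ∃ n : ℕ, a = ((hypXUnit h f ^ (-(n : ℤ)) : (HypA h f)ˣ) : HypA h f) } ∪
    { a : HypA h f | ∃ m : ℕ, g + 1 ≤ m ∧
        a = hypYA h f * ((hypXUnit h f ^ (-(m : ℤ)) : (HypA h f)ˣ) : HypA h f) }

lemma aux_mem (g t : ℕ) (w : HypA h f)
    (hw : ∀ M : ℕ, t ≤ M →
      w * ((hypXUnit h f ^ (-(M : ℤ)) : (HypA h f)ˣ) : HypA h f)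
        ∈ Submodule.span k (hypGens h f g))
    (c : k[X]) (N : ℕ) (hN : c.natDegree + t ≤ N) :
    algebraMap (HypRing h f) (HypA h f) (AdjoinRoot.of (hypPoly h f) c) * w *
        ((hypXUnit h f ^ (-(N : ℤ)) : (HypA h f)ˣ) : HypA h f)
      ∈ Submodule.span k (hypGens h f g) := by
  have hc := c.as_sum_range_C_mul_X_pow
  rw [hc]
  rw [map_sum, map_sum, Finset.sum_mul, Finset.sum_mul]
  apply Submodule.sum_mem
  intro i hi
  rw [Finset.mem_range] at hi
  have hiN : i ≤ N := by omega
  have key : algebraMap (HypRing h f) (HypA h f)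
      (AdjoinRoot.of (hypPoly h f) (C (c.coeff i) * X ^ i)) * w *
      ((hypXUnit h f ^ (-(N : ℤ)) : (HypA h f)ˣ) : HypA h f)
      = c.coeff i • (w * ((hypXUnit h f ^ (-((N - i : ℕ) : ℤ)) : (HypA h f)ˣ) : HypA h f)) := by
    have e1 : (AdjoinRoot.of (hypPoly h f)) (C (c.coeff i) * X ^ i)
        = algebraMap k (HypRing h f) (c.coeff i) * hypX h f ^ i := by
      rw [map_mul, map_pow]
      rfl
    rw [e1, map_mul, map_pow, ← IsScalarTower.algebraMap_apply, Algebra.algebraMap_eq_smul_one,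
      ← hypU_val]
    have e2 : ((hypXUnit h f : (HypA h f)ˣ) : HypA h f) ^ i *
        ((hypXUnit h f ^ (-(N : ℤ)) : (HypA h f)ˣ) : HypA h f)
        = ((hypXUnit h f ^ (-((N - i : ℕ) : ℤ)) : (HypA h f)ˣ) : HypA h f) := by
      have e0 : (-((N - i : ℕ) : ℤ)) = (i : ℤ) + (-(N : ℤ)) := by omega
      rw [e0, zpow_add, zpow_natCast, Units.val_mul, Units.val_pow_eq_pow_val]
    rw [smul_mul_assoc, one_mul, smul_mul_assoc, smul_mul_assoc]
    congr 1
    linear_combination w * e2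
  rw [key]
  exact Submodule.smul_mem _ _ (hw (N - i) (by omega))

lemma mem_gens_x (g : ℕ) (n : ℕ) :
    ((hypXUnit h f ^ (-(n : ℤ)) : (HypA h f)ˣ) : HypA h f) ∈ Submodule.span k (hypGens h f g) :=
  Submodule.subset_span (Or.inl ⟨n, rfl⟩)

lemma mem_gens_y (g : ℕ) (m : ℕ) (hm : g + 1 ≤ m) :
    hypYA h f * ((hypXUnit h f ^ (-(m : ℤ)) : (HypA h f)ˣ) : HypA h f)
      ∈ Submodule.span k (hypGens h f g) :=
  Submodule.subset_span (Or.inr ⟨m, hm, rfl⟩)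

lemma hypU_mul (n m : ℕ) :
    ((hypXUnit h f ^ (-(n : ℤ)) : (HypA h f)ˣ) : HypA h f) *
      ((hypXUnit h f ^ (-(m : ℤ)) : (HypA h f)ˣ) : HypA h f)
      = ((hypXUnit h f ^ (-((n + m : ℕ) : ℤ)) : (HypA h f)ˣ) : HypA h f) := by
  rw [← Units.val_mul, ← zpow_add]
  congr 1
  push_cast
  ring

lemma gens_mul (g : ℕ) (hdegf : f.natDegree ≤ 2 * g + 2) (hdegh : h.natDegree ≤ g + 1) :
    ∀ a ∈ hypGens h f g, ∀ b ∈ hypGens h f g, a * b ∈ Submodule.span k (hypGens h f g) := by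
  have hwY : ∀ M : ℕ, g + 1 ≤ M →
      hypYA h f * ((hypXUnit h f ^ (-(M : ℤ)) : (HypA h f)ˣ) : HypA h f)
        ∈ Submodule.span k (hypGens h f g) := fun M hM => mem_gens_y h f g M hM
  have hw1 : ∀ M : ℕ, 0 ≤ M →
      (1 : HypA h f) * ((hypXUnit h f ^ (-(M : ℤ)) : (HypA h f)ˣ) : HypA h f)
        ∈ Submodule.span k (hypGens h f g) := by
    intro M _
    rw [one_mul]
    exact mem_gens_x h f g M
  rintro a (⟨n, rfl⟩ | ⟨m, hm, rfl⟩) b (⟨n', rfl⟩ | ⟨m', hm', rfl⟩)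
  · rw [hypU_mul]
    exact mem_gens_x h f g _
  · rw [mul_left_comm, hypU_mul]
    exact mem_gens_y h f g _ (by omega)
  · rw [mul_assoc, hypU_mul]
    exact mem_gens_y h f g _ (by omega)
  · have e : (hypYA h f * ((hypXUnit h f ^ (-(m : ℤ)) : (HypA h f)ˣ) : HypA h f)) *
        (hypYA h f * ((hypXUnit h f ^ (-(m' : ℤ)) : (HypA h f)ˣ) : HypA h f))
        = hypYA h f ^ 2 * (((hypXUnit h f ^ (-(m : ℤ)) : (HypA h f)ˣ) : HypA h f) *
          ((hypXUnit h f ^ (-(m' : ℤ)) : (HypA h f)ˣ) : HypA h f)) := by ring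
    rw [e, hypU_mul, hypY_sq, add_mul]
    apply add_mem
    · exact aux_mem h f g (g + 1) (hypYA h f) hwY h (m + m') (by omega)
    · have := aux_mem h f g 0 (1 : HypA h f) hw1 f (m + m') (by omega)
      rwa [mul_one] at this


/-- The `k`-subalgebra `B₀` of `A` generated by `x⁻¹` and `y·x^{−(g+1)}`
equals, as a `k`-subspace of `A`, the `k`-linear span of
`{x^{−n} : n ≥ 0} ∪ {y·x^{−m} : m ≥ g+1}`. -/
theorem statement1 {k : Type} [Field k] [IsAlgClosed k] (g : ℕ) (hg : 2 ≤ g)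
    (f h : k[X]) (hf : f.Monic) (hdegf : f.natDegree ≤ 2 * g + 2)
    (hdegh : h.natDegree ≤ g + 1)
    (hirr : Irreducible
      ((hypPoly h f).map (algebraMap (Polynomial k) (RatFunc k)))) :
    Subalgebra.toSubmodule
        (Algebra.adjoin k
          {((hypXUnit h f ^ (-1 : ℤ) : (HypA h f)ˣ) : HypA h f),
            hypYA h f * ((hypXUnit h f ^ (-(g + 1 : ℤ)) : (HypA h f)ˣ) : HypA h f)}) =
      Submodule.span k
        ({ a : HypA h f | ∃ n : ℕ, a = ((hypXUnit h f ^ (-(n : ℤ)) : (HypA h f)ˣ) : HypA h f) } ∪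
          { a : HypA h f | ∃ m : ℕ, g + 1 ≤ m ∧
              a = hypYA h f * ((hypXUnit h f ^ (-(m : ℤ)) : (HypA h f)ˣ) : HypA h f) }) := by
  have hsets : ({ a : HypA h f | ∃ n : ℕ, a = ((hypXUnit h f ^ (-(n : ℤ)) : (HypA h f)ˣ) : HypA h f) } ∪
          { a : HypA h f | ∃ m : ℕ, g + 1 ≤ m ∧
              a = hypYA h f * ((hypXUnit h f ^ (-(m : ℤ)) : (HypA h f)ˣ) : HypA h f) })
      = hypGens h f g := rfl
  rw [hsets]
  have hu : ((hypXUnit h f ^ (-1 : ℤ) : (HypA h f)ˣ) : HypA h f) ∈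
      Algebra.adjoin k
        {((hypXUnit h f ^ (-1 : ℤ) : (HypA h f)ˣ) : HypA h f),
          hypYA h f * ((hypXUnit h f ^ (-(g + 1 : ℤ)) : (HypA h f)ˣ) : HypA h f)} :=
    Algebra.subset_adjoin (Set.mem_insert _ _)
  have hv : hypYA h f * ((hypXUnit h f ^ (-(g + 1 : ℤ)) : (HypA h f)ˣ) : HypA h f) ∈
      Algebra.adjoin k
        {((hypXUnit h f ^ (-1 : ℤ) : (HypA h f)ˣ) : HypA h f),
          hypYA h f * ((hypXUnit h f ^ (-(g + 1 : ℤ)) : (HypA h f)ˣ) : HypA h f)} :=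
    Algebra.subset_adjoin (Set.mem_insert_of_mem _ rfl)
  apply le_antisymm
  · -- adjoin ≤ span
    have hone : (1 : HypA h f) ∈ Submodule.span k (hypGens h f g) := by
      apply Submodule.subset_span
      left
      exact ⟨0, by simp⟩
    have hmul : ∀ a b : HypA h f, a ∈ Submodule.span k (hypGens h f g) →
        b ∈ Submodule.span k (hypGens h f g) → a * b ∈ Submodule.span k (hypGens h f g) := by
      intro a b ha hb
      have h1 : a * b ∈ Submodule.span k (hypGens h f g) * Submodule.span k (hypGens h f g) :=
        Submodule.mul_mem_mul ha hb
      rw [Submodule.span_mul_span] at h1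
      refine Submodule.span_le.2 ?_ h1
      rintro z ⟨p, hp, q, hq, rfl⟩
      exact gens_mul h f g hdegf hdegh p hp q hq
    have hle : Algebra.adjoin k
        {((hypXUnit h f ^ (-1 : ℤ) : (HypA h f)ˣ) : HypA h f),
          hypYA h f * ((hypXUnit h f ^ (-(g + 1 : ℤ)) : (HypA h f)ˣ) : HypA h f)}
        ≤ (Submodule.span k (hypGens h f g)).toSubalgebra hone hmul := by
      apply Algebra.adjoin_le
      rintro z hz
      rcases hz with rfl | rfl
      · apply Submodule.subset_span
        left
        exact ⟨1, by norm_num⟩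
      · apply Submodule.subset_span
        right
        exact ⟨g + 1, le_refl _, by push_cast; ring_nf⟩
    intro z hz
    exact hle hz
  · rw [Submodule.span_le]
    rintro z (⟨n, rfl⟩ | ⟨m, hm, rfl⟩)
    · rw [SetLike.mem_coe, Subalgebra.mem_toSubmodule]
      have e : ((hypXUnit h f ^ (-(n : ℤ)) : (HypA h f)ˣ) : HypA h f)
          = (((hypXUnit h f ^ (-1 : ℤ) : (HypA h f)ˣ) : HypA h f)) ^ n := by
        rw [← Units.val_pow_eq_pow_val, ← zpow_natCast (hypXUnit h f ^ (-1 : ℤ)), ← zpow_mul]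
        congr 1
        push_cast
        ring
      rw [e]
      exact pow_mem hu n
    · rw [SetLike.mem_coe, Subalgebra.mem_toSubmodule]
      have e : ((hypXUnit h f ^ (-(m : ℤ)) : (HypA h f)ˣ) : HypA h f)
          = ((hypXUnit h f ^ (-(g + 1 : ℤ)) : (HypA h f)ˣ) : HypA h f) *
            (((hypXUnit h f ^ (-1 : ℤ) : (HypA h f)ˣ) : HypA h f)) ^ (m - (g + 1)) := by
        rw [← Units.val_pow_eq_pow_val, ← zpow_natCast (hypXUnit h f ^ (-1 : ℤ)), ← zpow_mul,
          ← Units.val_mul, ← zpow_add]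
        congr 1
        rw [Nat.cast_sub hm]
        push_cast
        ring
      rw [e, ← mul_assoc]
      exact mul_mem hv (pow_mem hu _)
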